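/- Let H be a finite nonempty set, let Z be a set, and let q : Z^n × H → ℝ be a score function of sensitivity 1, meaning |q(S,h) − q(S',h)| ≤ 1 for every h ∈ H and every pair of datasets S, S' ∈ Z^n differing in a single entry. For ε > 0, let M_E(S, q, ε) denote the distribution on H assigning to each h the probability exp(ε q(S,h)/2) / Σ_{h' ∈ H} exp(ε q(S,h')/2). Then for every pair of datasets S, S' ∈ Z^n differing in a single entry and every h ∈ H, Pr[M_E(S,q,ε) = h] ≤ e^ε · Pr[M_E(S',q,ε) = h]. -/
import Mathlib


/-- Privacy of the Exponential Mechanism: for a sensitivity-1 score function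
`q : Zⁿ × H → ℝ`, neighboring datasets `S, S'` (differing in a single entry), and any
candidate `h`, the probability that the mechanism (which outputs each `h` with probability
proportional to `exp(ε q(S,h)/2)`) outputs `h` on `S` is at most `e^ε` times the probability
that it outputs `h` on `S'`. -/
theorem stmt_1 {Z H : Type*} [Fintype H] [Nonempty H] (n : ℕ)
    (q : (Fin n → Z) → H → ℝ) (ε : ℝ) (hε : 0 < ε)
    (hsens : ∀ (h : H) (S S' : Fin n → Z),
      (∃ i : Fin n, ∀ k : Fin n, k ≠ i → S k = S' k) → |q S h - q S' h| ≤ 1)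
    (S S' : Fin n → Z) (hneighbor : ∃ i : Fin n, ∀ k : Fin n, k ≠ i → S k = S' k)
    (h : H) :
    Real.exp (ε * q S h / 2) / (∑ h' : H, Real.exp (ε * q S h' / 2))
      ≤ Real.exp ε *
        (Real.exp (ε * q S' h / 2) / (∑ h' : H, Real.exp (ε * q S' h' / 2))) := by
  have hb : 0 < ∑ h' : H, Real.exp (ε * q S h' / 2) :=
    Finset.sum_pos (fun _ _ => Real.exp_pos _) Finset.univ_nonempty
  have hd : 0 < ∑ h' : H, Real.exp (ε * q S' h' / 2) :=
    Finset.sum_pos (fun _ _ => Real.exp_pos _) Finset.univ_nonempty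
  rw [div_le_iff₀ hb, mul_comm (Real.exp ε), mul_assoc, div_mul_eq_mul_div, le_div_iff₀ hd]
  have h1 : Real.exp (ε * q S h / 2) ≤ Real.exp (ε / 2) * Real.exp (ε * q S' h / 2) := by
    rw [← Real.exp_add]
    apply Real.exp_le_exp.2
    have := hsens h S S' hneighbor
    have := abs_le.1 this
    nlinarith [this.2]
  have h2 : (∑ h' : H, Real.exp (ε * q S' h' / 2))
      ≤ Real.exp (ε / 2) * ∑ h' : H, Real.exp (ε * q S h' / 2) := by
    rw [Finset.mul_sum]
    apply Finset.sum_le_sum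
    intro g _
    rw [← Real.exp_add]
    apply Real.exp_le_exp.2
    have hn' : ∃ i : Fin n, ∀ k : Fin n, k ≠ i → S' k = S k := by
      obtain ⟨i, hi⟩ := hneighbor
      exact ⟨i, fun k hk => (hi k hk).symm⟩
    have := abs_le.1 (hsens g S' S hn')
    nlinarith [this.2]
  calc Real.exp (ε * q S h / 2) * ∑ h' : H, Real.exp (ε * q S' h' / 2)
      ≤ (Real.exp (ε / 2) * Real.exp (ε * q S' h / 2)) *
        (Real.exp (ε / 2) * ∑ h' : H, Real.exp (ε * q S h' / 2)) := by
        apply mul_le_mul h1 h2 hd.le (by positivity)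
    _ = Real.exp (ε * q S' h / 2) * (Real.exp ε * ∑ h' : H, Real.exp (ε * q S h' / 2)) := by
        have hee : Real.exp (ε / 2) * Real.exp (ε / 2) = Real.exp ε := by
          rw [← Real.exp_add]; norm_num
        rw [← hee]; ring
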